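/- If π, σ ∈ S̃_n and π ≺_A σ, then λ(π) < λ(σ) in dominance order on partitions. -/

import Mathlib

open scoped TensorProduct

/-- Membership in the affine symmetric group `S̃_n`, viewed inside `Equiv.Perm ℤ`. -/
def IsAffine (n : ℕ) (π : Equiv.Perm ℤ) : Prop :=
  (∀ i : ℤ, π (i + n) = π i + n) ∧
  (∑ i ∈ Finset.Icc (1 : ℤ) (n : ℤ), π i) = ∑ i ∈ Finset.Icc (1 : ℤ) (n : ℤ), i

/-- The underlying function of the affine reflection `t_{ij}`. -/
def affTFun (n : ℕ) (i j k : ℤ) : ℤ :=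
  if (k - i) % (n : ℤ) = 0 then k - i + j
  else if (k - j) % (n : ℤ) = 0 then k - j + i
  else k

theorem affTFun_involutive {n : ℕ} {i j : ℤ} (h : ¬ (j - i) % (n : ℤ) = 0) :
    Function.Involutive (affTFun n i j) := by
  have key : ∀ a : ℤ, a % (n : ℤ) = 0 ↔ (n : ℤ) ∣ a :=
    fun a => (@Int.dvd_iff_emod_eq_zero (n : ℤ) a).symm
  rw [key] at h
  intro k
  by_cases h1 : (n : ℤ) ∣ (k - i)
  · have h2 : ¬ (n : ℤ) ∣ (k - i + j - i) := by
      intro hd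
      apply h
      have h5 : j - i = (k - i + j - i) - (k - i) := by ring
      rw [h5]
      exact dvd_sub hd h1
    have h3 : (n : ℤ) ∣ (k - i + j - j) := by
      have h5 : k - i + j - j = k - i := by ring
      rw [h5]; exact h1
    have e1 : affTFun n i j k = k - i + j := by simp [affTFun, key, h1]
    have e2 : affTFun n i j (k - i + j) = k := by
      simp only [affTFun, key]
      rw [if_neg h2, if_pos h3]
      ring
    rw [e1, e2]
  · by_cases h2 : (n : ℤ) ∣ (k - j)
    · have h3 : (n : ℤ) ∣ (k - j + i - i) := by
        have h5 : k - j + i - i = k - j := by ring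
        rw [h5]; exact h2
      have e1 : affTFun n i j k = k - j + i := by simp [affTFun, key, h1, h2]
      have e2 : affTFun n i j (k - j + i) = k := by
        simp only [affTFun, key]
        rw [if_pos h3]
        ring
      rw [e1, e2]
    · have e1 : affTFun n i j k = k := by simp [affTFun, key, h1, h2]
      rw [e1, e1]

/-- The affine reflection `t_{ij}` (interpreted as the identity when `i ≡ j (mod n)`). -/
noncomputable def affT (n : ℕ) (i j : ℤ) : Equiv.Perm ℤ :=
  if h : (j - i) % (n : ℤ) = 0 then 1
  else Function.Involutive.toPerm _ (affTFun_involutive h)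

/-- The simple reflection `s_i = t_{i,i+1}` of `S̃_n`. -/
noncomputable def affS (n : ℕ) (i : ℤ) : Equiv.Perm ℤ := affT n i (i + 1)

/-- Coxeter length: minimal length of a word in the simple reflections `s_1, …, s_n`. -/
noncomputable def wordLength (n : ℕ) (π : Equiv.Perm ℤ) : ℕ :=
  sInf {l : ℕ | ∃ w : List ℤ,
    (∀ x ∈ w, 1 ≤ x ∧ x ≤ (n : ℤ)) ∧ (w.map (affS n)).prod = π ∧ w.length = l}

/-- The set of inversions of `π`, up to the diagonal translation relation. -/
def InvPair (π : Equiv.Perm ℤ) : Type :=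
  {p : ℤ × ℤ // p.1 < p.2 ∧ π p.2 < π p.1}

/-- The number of equivalence classes of inversions of `π` under
`(a,b) ~ (a + mn, b + mn)`. -/
noncomputable def invLength (n : ℕ) (π : Equiv.Perm ℤ) : ℕ :=
  Nat.card (Quot fun p q : InvPair π =>
    ∃ m : ℤ, q.1.1 = p.1.1 + m * n ∧ q.1.2 = p.1.2 + m * n)

/-- Entry `c_i` of the code of an affine permutation. -/
noncomputable def codeEntry (π : Equiv.Perm ℤ) (i : ℤ) : ℕ :=
  Nat.card {j : ℤ // i < j ∧ π j < π i}

/-- Entry `ĉ_i` of the involution code of an affine involution. -/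
noncomputable def icodeEntry (z : Equiv.Perm ℤ) (i : ℤ) : ℕ :=
  Nat.card {j : ℤ // i < j ∧ z j < z i ∧ z j ≤ i}

/-- `ℓ'(z)`: `n` minus the number of orbits of `z` acting on `ℤ/nℤ`. -/
noncomputable def lprime (n : ℕ) (z : Equiv.Perm ℤ) : ℕ :=
  n - Nat.card (Quot fun a b : ZMod n => ((z (a.val : ℤ) : ℤ) : ZMod n) = b)

/-- The characterizing properties of the Demazure (0-Hecke) product on `S̃_n`:
closure, associativity, `s_i ∘ s_i = s_i`, and agreement with the group product
on length-additive factorizations. -/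
def IsDemazure (n : ℕ) (D : Equiv.Perm ℤ → Equiv.Perm ℤ → Equiv.Perm ℤ) : Prop :=
  (∀ a b, IsAffine n a → IsAffine n b → IsAffine n (D a b)) ∧
  (∀ a b c, IsAffine n a → IsAffine n b → IsAffine n c →
    D (D a b) c = D a (D b c)) ∧
  (∀ i : ℤ, D (affS n i) (affS n i) = affS n i) ∧
  (∀ a b, IsAffine n a → IsAffine n b →
    wordLength n (a * b) = wordLength n a + wordLength n b → D a b = a * b)

/-- The set of Hecke atoms `{π : π⁻¹ ∘ π = z}`. -/
def AHecke (n : ℕ) (D : Equiv.Perm ℤ → Equiv.Perm ℤ → Equiv.Perm ℤ)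
    (z : Equiv.Perm ℤ) : Set (Equiv.Perm ℤ) :=
  {π | IsAffine n π ∧ D π⁻¹ π = z}

/-- The set of atoms: minimal-length Hecke atoms. -/
def DemAtoms (n : ℕ) (D : Equiv.Perm ℤ → Equiv.Perm ℤ → Equiv.Perm ℤ)
    (z : Equiv.Perm ℤ) : Set (Equiv.Perm ℤ) :=
  {π | π ∈ AHecke n D z ∧ ∀ σ ∈ AHecke n D z, wordLength n π ≤ wordLength n σ}

/-- The Bruhat covering relation on `S̃_n`. -/
def BruhatCov (n : ℕ) (a b : Equiv.Perm ℤ) : Prop :=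
  (∃ i j : ℤ, i < j ∧ (j - i) % (n : ℤ) ≠ 0 ∧ b = a * affT n i j) ∧
  wordLength n b = wordLength n a + 1

/-- The Bruhat order on `S̃_n`. -/
def BruhatLE (n : ℕ) : Equiv.Perm ℤ → Equiv.Perm ℤ → Prop :=
  Relation.ReflTransGen (BruhatCov n)

/-- The covering relation of the Bruhat order restricted to involutions in `S̃_n`. -/
def BruhatCovI (n : ℕ) (y z : Equiv.Perm ℤ) : Prop :=
  IsAffine n y ∧ IsAffine n z ∧ y⁻¹ = y ∧ z⁻¹ = z ∧
  BruhatLE n y z ∧ y ≠ z ∧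
  ∀ w : Equiv.Perm ℤ, IsAffine n w → w⁻¹ = w →
    BruhatLE n y w → BruhatLE n w z → w = y ∨ w = z

/-- Strict dominance order on partitions (written as weakly decreasing functions). -/
def DomLT (p q : ℕ → ℕ) : Prop :=
  p ≠ q ∧ ∀ k : ℕ, ∑ i ∈ Finset.range k, p i ≤ ∑ i ∈ Finset.range k, q i

/-- The shape `λ(π)`: the transpose of the partition sorting the code of `π⁻¹`,
recorded as the weakly decreasing function `k ↦ λ(π)_{k+1}`. -/
noncomputable def affShape (n : ℕ) (π : Equiv.Perm ℤ) : ℕ → ℕ :=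
  fun k => Multiset.countP (fun x => k < x)
    ((Finset.Icc (1 : ℤ) (n : ℤ)).val.map (codeEntry π⁻¹))

/-- The shape `μ(z)`: the transpose of the partition sorting the involution code of `z`,
recorded as the weakly decreasing function `k ↦ μ(z)_{k+1}`. -/
noncomputable def invShape (n : ℕ) (z : Equiv.Perm ℤ) : ℕ → ℕ :=
  fun k => Multiset.countP (fun x => k < x)
    ((Finset.Icc (1 : ℤ) (n : ℤ)).val.map (icodeEntry z))

/-- The weakly decreasing rearrangement of a multiset of naturals, padded by zeros. -/
noncomputable def rearr (s : Multiset ℕ) : ℕ → ℕ :=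
  fun k => ((s.sort (· ≤ ·)).reverse).getD k 0

/-- Remove the entries of a list of integers that repeat an earlier residue mod `n`. -/
def dedupMod (n : ℕ) : List ℤ → List ℤ
  | [] => []
  | x :: xs => x :: dedupMod n (xs.filter fun y => (y - x) % (n : ℤ) ≠ 0)
termination_by l => l.length
decreasing_by
  simp only [List.length_cons]
  first
  | exact Nat.lt_succ_of_le (List.length_filter_le _ _)
  | (simp only [List.length_unattach]
     exact Nat.lt_succ_of_le ((List.length_filter_le _ _).trans_eq (List.length_attach ..)))
  | (simp only [List.length_unattach, List.length_map]
     exact Nat.lt_succ_of_le ((List.length_filter_le _ _).trans_eq (List.length_attach ..)))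
  | (simp only [List.unattach, List.length_map]
     exact Nat.lt_succ_of_le ((List.length_filter_le _ _).trans_eq (List.length_attach ..)))

/-- The window `[[z(a₁), a₁, z(a₂), a₂, …]]` of `α_min(z)⁻¹`, where `a₁ < a₂ < ⋯`
are the elements `a ∈ [n]` with `a ≤ z(a)`. -/
noncomputable def aminWindow (n : ℕ) (z : Equiv.Perm ℤ) : List ℤ :=
  dedupMod n
    ((((Finset.Icc (1 : ℤ) (n : ℤ)).sort (· ≤ ·)).filter fun a => a ≤ z a).flatMap
      fun a => [z a, a])

/-- Cyclically decreasing elements of `S̃_n`. -/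
def IsCycDec (n : ℕ) (π : Equiv.Perm ℤ) : Prop :=
  ∃ w : List ℤ,
    (∀ x ∈ w, 1 ≤ x ∧ x ≤ (n : ℤ)) ∧ (w.map (affS n)).prod = π ∧
    w.length = wordLength n π ∧
    w.Pairwise fun a b => (a + 1 - b) % (n : ℤ) ≠ 0

/-- The coefficient of the monomial `∏ₖ xₖ₊₁^(α k)` in Lam's affine Stanley symmetric
function `F_π`: the number of length-additive factorizations of `π` into cyclically
decreasing factors of lengths prescribed by `α`. -/
noncomputable def stanleyCoeff (n : ℕ) (π : Equiv.Perm ℤ) (α : ℕ →₀ ℕ) : ℕ :=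
  Nat.card {f : ℕ → Equiv.Perm ℤ //
    (∀ k, IsCycDec n (f k)) ∧ (∀ k, wordLength n (f k) = α k) ∧
    (∑ k ∈ α.support, α k) = wordLength n π ∧
    ∃ N : ℕ, (∀ k, N ≤ k → f k = 1) ∧ ((List.range N).map f).prod = π}

/-- The set `Φ⁻_r(y)` of Bruhat covers of `y` of the form `τⁿ_{i r}(y)` with `i < r`
and `i ∉ {r, y(r)} + nℤ`. -/
def PhiMinus (n : ℕ) (τ : ℤ → ℤ → Equiv.Perm ℤ → Equiv.Perm ℤ)
    (y : Equiv.Perm ℤ) (r : ℤ) : Set (Equiv.Perm ℤ) :=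
  {z | BruhatCovI n y z ∧ ∃ i : ℤ, i < r ∧ (i - r) % (n : ℤ) ≠ 0 ∧
    (i - y r) % (n : ℤ) ≠ 0 ∧ z = τ i r y}

/-- The set `Φ⁺_r(y)` of Bruhat covers of `y` of the form `τⁿ_{r j}(y)` with `r < j`
and `j ∉ {r, y(r)} + nℤ`. -/
def PhiPlus (n : ℕ) (τ : ℤ → ℤ → Equiv.Perm ℤ → Equiv.Perm ℤ)
    (y : Equiv.Perm ℤ) (r : ℤ) : Set (Equiv.Perm ℤ) :=
  {z | BruhatCovI n y z ∧ ∃ j : ℤ, r < j ∧ (j - r) % (n : ℤ) ≠ 0 ∧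
    (j - y r) % (n : ℤ) ≠ 0 ∧ z = τ r j y}

/-- The affine symmetric group as a subtype of `Equiv.Perm ℤ`. -/
abbrev AffPerm (n : ℕ) := {π : Equiv.Perm ℤ // IsAffine n π}

/-- The coproduct `Δ(π) = Σ_{π ≐ π'π''} π' ⊗ π''` on `ℚ S̃_n`. -/
noncomputable def affComul (n : ℕ) :
    (AffPerm n →₀ ℚ) →ₗ[ℚ] TensorProduct ℚ (AffPerm n →₀ ℚ) (AffPerm n →₀ ℚ) :=
  Finsupp.lift _ ℚ _ fun π : AffPerm n =>
    ∑ᶠ p ∈ {p : AffPerm n × AffPerm n |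
        p.1.val * p.2.val = π.val ∧
        wordLength n π.val = wordLength n p.1.val + wordLength n p.2.val},
      (Finsupp.single p.1 (1 : ℚ)) ⊗ₜ[ℚ] (Finsupp.single p.2 (1 : ℚ))

theorem codeEntry_def (v : Equiv.Perm ℤ) (i : ℤ) :
    codeEntry v i = Nat.card {j : ℤ // i < j ∧ v j < v i} := rfl

theorem aff_period {n : ℕ} {v : Equiv.Perm ℤ} (hv : ∀ i : ℤ, v (i + (n:ℤ)) = v i + (n:ℤ)) (i q : ℤ) :
    v (i + (n:ℤ) * q) = v i + (n:ℤ) * q := by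
  induction q using Int.induction_on with
  | zero => simp
  | succ m ih =>
      have h := hv (i + (n:ℤ) * (m:ℤ))
      have e : i + (n:ℤ) * ((m:ℤ) + 1) = (i + (n:ℤ) * (m:ℤ)) + (n:ℤ) := by ring
      rw [e, h, ih]; ring
  | pred m ih =>
      have h := hv (i + (n:ℤ) * (-(m:ℤ) - 1))
      have e : (i + (n:ℤ) * (-(m:ℤ) - 1)) + (n:ℤ) = i + (n:ℤ) * (-(m:ℤ)) := by ring
      rw [e] at h
      have e2 : (n:ℤ) * (-(m:ℤ) - 1) = (n:ℤ) * (-(m:ℤ)) - (n:ℤ) := by ring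
      conv_rhs => rw [e2]
      linarith [h, ih]

theorem codeEntry_period {n : ℕ} {v : Equiv.Perm ℤ}
    (hv : ∀ i : ℤ, v (i + (n:ℤ)) = v i + (n:ℤ)) (i q : ℤ) :
    codeEntry v (i + (n:ℤ) * q) = codeEntry v i := by
  rw [codeEntry_def, codeEntry_def]
  refine (Nat.card_congr ((Equiv.subtypeEquiv (Equiv.addRight ((n:ℤ)*q)) (fun a => ?_)))).symm
  simp only [Equiv.coe_addRight]
  rw [aff_period hv a q, aff_period hv i q]
  constructor
  · rintro ⟨h1, h2⟩; exact ⟨by linarith, by linarith⟩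
  · rintro ⟨h1, h2⟩; exact ⟨by linarith, by linarith⟩


theorem exists_rep (n : ℕ) (hn : 0 < n) (i : ℤ) : ∃ r q : ℤ, 1 ≤ r ∧ r ≤ (n:ℤ) ∧ i = r + (n:ℤ) * q := by
  refine ⟨i - (n:ℤ) * ((i-1)/(n:ℤ)), (i-1)/(n:ℤ), ?_, ?_, by ring⟩
  · have h1 := Int.emod_nonneg (i-1) (by exact_mod_cast hn.ne' : (n:ℤ) ≠ 0)
    have h3 := Int.mul_ediv_add_emod (i-1) (n:ℤ)
    linarith
  · have h2 := Int.emod_lt_of_pos (i-1) (by exact_mod_cast hn : (0:ℤ) < (n:ℤ))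
    have h3 := Int.mul_ediv_add_emod (i-1) (n:ℤ)
    linarith

theorem inv_finite (n : ℕ) (hn : 0 < n) (v : Equiv.Perm ℤ)
    (hv : ∀ i : ℤ, v (i + (n:ℤ)) = v i + (n:ℤ)) (i x : ℤ) :
    {j : ℤ | i < j ∧ v j < x}.Finite := by
  classical
  have hFne : ((Finset.Icc (1:ℤ) (n:ℤ)).image (fun r => v r - r)).Nonempty :=
    ⟨v 1 - 1, Finset.mem_image.mpr ⟨1, Finset.mem_Icc.mpr ⟨le_refl _, by exact_mod_cast hn⟩, rfl⟩⟩
  set D := ((Finset.Icc (1:ℤ) (n:ℤ)).image (fun r => v r - r)).min' hFne with hD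
  have hbound : ∀ j : ℤ, D ≤ v j - j := by
    intro j
    obtain ⟨r, q, hr1, hr2, hj⟩ := exists_rep n hn j
    have hvj : v j = v r + (n:ℤ)*q := by rw [hj, aff_period hv r q]
    have hmem : v r - r ∈ (Finset.Icc (1:ℤ) (n:ℤ)).image (fun r => v r - r) :=
      Finset.mem_image.mpr ⟨r, Finset.mem_Icc.mpr ⟨hr1, hr2⟩, rfl⟩
    have hle := Finset.min'_le _ _ hmem
    rw [hvj, hj]
    linarith [hle]
  apply Set.Finite.subset (Set.finite_Ioo i (x - D))
  intro j hj
  exact ⟨hj.1, by have := hbound j; have := hj.2; simp only [Set.mem_setOf_eq] at *; linarith⟩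

theorem sum_ite_lt (a K : ℕ) : (∑ i ∈ Finset.range K, if i < a then 1 else 0) = min a K := by
  induction K with
  | zero => simp
  | succ K ih => rw [Finset.sum_range_succ, ih]; split_ifs with h <;> omega

theorem sum_countP (s : Multiset ℕ) (K : ℕ) :
    (∑ i ∈ Finset.range K, Multiset.countP (fun x => i < x) s) = (s.map (fun x => min x K)).sum := by
  induction s using Multiset.induction_on with
  | empty => simp
  | cons a s ih =>
      simp only [Multiset.countP_cons, Multiset.map_cons, Multiset.sum_cons,
        Finset.sum_add_distrib, ih, sum_ite_lt]
      omega


theorem tri3 {n t : ℤ} (hn : 3 ≤ n) : n*t ≤ -3 ∨ n*t = 0 ∨ 3 ≤ n*t := by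
  rcases lt_trichotomy t 0 with h | rfl | h
  · left; nlinarith
  · right; left; ring
  · right; right; nlinarith

theorem winuniq {n i r t : ℤ} (hn : 3 ≤ n) (h1 : 1 ≤ i) (h2 : i ≤ n) (h3 : 1 ≤ r)
    (h4 : r ≤ n) (ht : i = r + n*t) : i = r := by
  rcases lt_trichotomy t 0 with h | rfl | h
  · nlinarith
  · linarith
  · nlinarith

set_option maxHeartbeats 2000000 in
theorem step_domlt (n : ℕ) (hn : 0 < n)
    (v w : Equiv.Perm ℤ)
    (hv : ∀ i : ℤ, v (i + (n:ℤ)) = v i + (n:ℤ))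
    (hw : ∀ i : ℤ, w (i + (n:ℤ)) = w i + (n:ℤ))
    (k a b c : ℤ) (hab : a < b) (hbc : b < c)
    (hv0 : v k = c) (hv1 : v (k+1) = a) (hv2 : v (k+2) = b)
    (hw0 : w k = b) (hw1 : w (k+1) = c) (hw2 : w (k+2) = a)
    (hoth : ∀ m : ℤ, (m - k) % (n:ℤ) ≠ 0 → (m - (k+1)) % (n:ℤ) ≠ 0 →
      (m - (k+2)) % (n:ℤ) ≠ 0 → v m = w m) :
    DomLT (affShape n v⁻¹) (affShape n w⁻¹) := by
  classical
  -- n ≥ 3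
  have hn3 : 3 ≤ n := by
    by_contra hlt
    push_neg at hlt
    interval_cases n
    · have h := hv k
      norm_num at h
      rw [hv1, hv0] at h
      omega
    · have h := hv k
      norm_num at h
      have e : k + 2 = k + (2:ℤ) := rfl
      rw [hv2, hv0] at h
      omega
  have hn' : (3:ℤ) ≤ (n:ℤ) := by exact_mod_cast hn3
  -- periodic values
  have hvk : ∀ t : ℤ, v (k + (n:ℤ)*t) = c + (n:ℤ)*t := by
    intro t; rw [aff_period hv k t, hv0]
  have hvk1 : ∀ t : ℤ, v ((k+1) + (n:ℤ)*t) = a + (n:ℤ)*t := by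
    intro t; rw [aff_period hv (k+1) t, hv1]
  have hvk2 : ∀ t : ℤ, v ((k+2) + (n:ℤ)*t) = b + (n:ℤ)*t := by
    intro t; rw [aff_period hv (k+2) t, hv2]
  have hwk : ∀ t : ℤ, w (k + (n:ℤ)*t) = b + (n:ℤ)*t := by
    intro t; rw [aff_period hw k t, hw0]
  have hwk1 : ∀ t : ℤ, w ((k+1) + (n:ℤ)*t) = c + (n:ℤ)*t := by
    intro t; rw [aff_period hw (k+1) t, hw1]
  have hwk2 : ∀ t : ℤ, w ((k+2) + (n:ℤ)*t) = a + (n:ℤ)*t := by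
    intro t; rw [aff_period hw (k+2) t, hw2]
  -- the permutation φ = w⁻¹ * v
  set φ : Equiv.Perm ℤ := w⁻¹ * v with hφdef
  have hφ : ∀ j : ℤ, w (φ j) = v j := by
    intro j
    rw [hφdef]
    simp [Equiv.Perm.mul_apply]
  have hφ0 : ∀ t : ℤ, φ (k + (n:ℤ)*t) = (k+1) + (n:ℤ)*t := by
    intro t
    apply w.injective
    rw [hφ, hvk t, hwk1 t]
  have hφ1 : ∀ t : ℤ, φ ((k+1) + (n:ℤ)*t) = (k+2) + (n:ℤ)*t := by
    intro t
    apply w.injective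
    rw [hφ, hvk1 t, hwk2 t]
  have hφ2 : ∀ t : ℤ, φ ((k+2) + (n:ℤ)*t) = k + (n:ℤ)*t := by
    intro t
    apply w.injective
    rw [hφ, hvk2 t, hwk t]
  have hφo : ∀ j : ℤ, (j - k) % (n:ℤ) ≠ 0 → (j - (k+1)) % (n:ℤ) ≠ 0 →
      (j - (k+2)) % (n:ℤ) ≠ 0 → φ j = j := by
    intro j h0 h1 h2
    apply w.injective
    rw [hφ, hoth j h0 h1 h2]
  -- sign trichotomy for n*t
  have htri : ∀ t : ℤ, (n:ℤ)*t ≤ -3 ∨ (n:ℤ)*t = 0 ∨ 3 ≤ (n:ℤ)*t := fun t => tri3 hn'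
  -- residue case split
  have cases4 : ∀ j : ℤ, (∃ t : ℤ, j = k + (n:ℤ)*t) ∨ (∃ t : ℤ, j = (k+1) + (n:ℤ)*t) ∨
      (∃ t : ℤ, j = (k+2) + (n:ℤ)*t) ∨
      ((j - k) % (n:ℤ) ≠ 0 ∧ (j - (k+1)) % (n:ℤ) ≠ 0 ∧ (j - (k+2)) % (n:ℤ) ≠ 0) := by
    intro j
    by_cases h0 : (j - k) % (n:ℤ) = 0
    · left
      obtain ⟨t, ht⟩ := Int.dvd_iff_emod_eq_zero.mpr h0
      exact ⟨t, by omega⟩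
    by_cases h1 : (j - (k+1)) % (n:ℤ) = 0
    · right; left
      obtain ⟨t, ht⟩ := Int.dvd_iff_emod_eq_zero.mpr h1
      exact ⟨t, by omega⟩
    by_cases h2 : (j - (k+2)) % (n:ℤ) = 0
    · right; right; left
      obtain ⟨t, ht⟩ := Int.dvd_iff_emod_eq_zero.mpr h2
      exact ⟨t, by omega⟩
    · right; right; right; exact ⟨h0, h1, h2⟩
  have hneq_gen : ∀ (i s : ℤ), (i - s) % (n:ℤ) ≠ 0 → ∀ t : ℤ, i ≠ s + (n:ℤ)*t := by
    intro i s h t heq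
    apply h
    have e : i - s = (n:ℤ)*t := by rw [heq]; ring
    rw [e]
    exact Int.mul_emod_right _ _
  -- the four claims
  have claimA : ∀ j : ℤ, v j < c → ((k+1 : ℤ) < φ j ↔ (k < j ∧ j ≠ k + 2)) := by
    intro j hj
    rcases cases4 j with ⟨t, rfl⟩ | ⟨t, rfl⟩ | ⟨t, rfl⟩ | ⟨h0, h1, h2⟩
    · rw [hvk t] at hj; rw [hφ0 t]
      rcases htri t with h | h | h <;> omega
    · rw [hvk1 t] at hj; rw [hφ1 t]
      rcases htri t with h | h | h <;> omega
    · rw [hvk2 t] at hj; rw [hφ2 t]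
      rcases htri t with h | h | h <;> omega
    · rw [hφo j h0 h1 h2]
      have e1 : j ≠ k + 1 := by
        have := hneq_gen j (k+1) h1 0
        omega
      have e2 : j ≠ k + 2 := by
        have := hneq_gen j (k+2) h2 0
        omega
      omega
  have claimB : ∀ j : ℤ, v j < b → ((k : ℤ) < φ j ↔ ((k + 2 < j) ∨ j = k + 1)) := by
    intro j hj
    rcases cases4 j with ⟨t, rfl⟩ | ⟨t, rfl⟩ | ⟨t, rfl⟩ | ⟨h0, h1, h2⟩
    · rw [hvk t] at hj; rw [hφ0 t]
      rcases htri t with h | h | h <;> omega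
    · rw [hvk1 t] at hj; rw [hφ1 t]
      rcases htri t with h | h | h <;> omega
    · rw [hvk2 t] at hj; rw [hφ2 t]
      rcases htri t with h | h | h <;> omega
    · rw [hφo j h0 h1 h2]
      have e1 : j ≠ k + 1 := by
        have := hneq_gen j (k+1) h1 0
        omega
      have e2 : j ≠ k + 2 := by
        have := hneq_gen j (k+2) h2 0
        omega
      omega
  have claimC : ∀ j : ℤ, v j < a → ((k + 2 : ℤ) < φ j ↔ k + 1 < j) := by
    intro j hj
    rcases cases4 j with ⟨t, rfl⟩ | ⟨t, rfl⟩ | ⟨t, rfl⟩ | ⟨h0, h1, h2⟩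
    · rw [hvk t] at hj; rw [hφ0 t]
      rcases htri t with h | h | h <;> omega
    · rw [hvk1 t] at hj; rw [hφ1 t]
      rcases htri t with h | h | h <;> omega
    · rw [hvk2 t] at hj; rw [hφ2 t]
      rcases htri t with h | h | h <;> omega
    · rw [hφo j h0 h1 h2]
      have e2 : j ≠ k + 2 := by
        have := hneq_gen j (k+2) h2 0
        omega
      omega
  have claimD : ∀ i : ℤ, (i - k) % (n:ℤ) ≠ 0 → (i - (k+1)) % (n:ℤ) ≠ 0 →
      (i - (k+2)) % (n:ℤ) ≠ 0 → ∀ j : ℤ, (i < φ j ↔ i < j) := by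
    intro i h0 h1 h2 j
    rcases cases4 j with ⟨t, rfl⟩ | ⟨t, rfl⟩ | ⟨t, rfl⟩ | ⟨g0, g1, g2⟩
    · rw [hφ0 t]
      have := hneq_gen i k h0 t
      omega
    · rw [hφ1 t]
      have := hneq_gen i (k+1) h1 t
      omega
    · rw [hφ2 t]
      have e0 := hneq_gen i k h0 t
      have e1 := hneq_gen i (k+1) h1 t
      omega
    · rw [hφo j g0 g1 g2]
  -- reindexing along φ
  have reindex : ∀ i' : ℤ, codeEntry w i' = Nat.card {j : ℤ // i' < φ j ∧ v j < w i'} := by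
    intro i'
    rw [codeEntry_def]
    exact (Nat.card_congr ((Equiv.subtypeEquiv (φ : ℤ ≃ ℤ)
      (fun j => by rw [← hφ j])))).symm
  -- code entries at the three special residues
  have Ew1 : codeEntry w (k+1) = Nat.card {j : ℤ // (k < j ∧ j ≠ k+2) ∧ v j < c} := by
    rw [reindex (k+1)]
    simp only [hw1]
    exact Nat.card_congr (Equiv.subtypeEquivRight (fun j => by
      constructor
      · rintro ⟨h1, h2⟩; exact ⟨(claimA j h2).mp h1, h2⟩
      · rintro ⟨h1, h2⟩; exact ⟨(claimA j h2).mpr h1, h2⟩))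
  have Ewk : codeEntry w k = Nat.card {j : ℤ // ((k + 2 < j) ∨ j = k + 1) ∧ v j < b} := by
    rw [reindex k]
    simp only [hw0]
    exact Nat.card_congr (Equiv.subtypeEquivRight (fun j => by
      constructor
      · rintro ⟨h1, h2⟩; exact ⟨(claimB j h2).mp h1, h2⟩
      · rintro ⟨h1, h2⟩; exact ⟨(claimB j h2).mpr h1, h2⟩))
  have Ew2 : codeEntry w (k+2) = codeEntry v (k+1) := by
    rw [reindex (k+2), codeEntry_def]
    simp only [hw2, hv1]
    exact Nat.card_congr (Equiv.subtypeEquivRight (fun j => by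
      constructor
      · rintro ⟨h1, h2⟩; exact ⟨(claimC j h2).mp h1, h2⟩
      · rintro ⟨h1, h2⟩; exact ⟨(claimC j h2).mpr h1, h2⟩))
  have FD : ∀ i : ℤ, (i - k) % (n:ℤ) ≠ 0 → (i - (k+1)) % (n:ℤ) ≠ 0 →
      (i - (k+2)) % (n:ℤ) ≠ 0 → codeEntry w i = codeEntry v i := by
    intro i h0 h1 h2
    rw [reindex i, codeEntry_def]
    have hwi : w i = v i := (hoth i h0 h1 h2).symm
    simp only [hwi]
    exact Nat.card_congr (Equiv.subtypeEquivRight (fun j => by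
      rw [claimD i h0 h1 h2 j]))
  -- cardinal arithmetic
  have finC : {j : ℤ | (k < j ∧ j ≠ k+2) ∧ v j < c}.Finite :=
    (inv_finite n hn v hv k c).subset (fun j hj => ⟨hj.1.1, hj.2⟩)
  have finB : {j : ℤ | k + 2 < j ∧ v j < b}.Finite := inv_finite n hn v hv (k+2) b
  have Evk : codeEntry v k = Nat.card {j : ℤ // (k < j ∧ j ≠ k+2) ∧ v j < c} + 1 := by
    rw [codeEntry_def]
    have hset : {j : ℤ | k < j ∧ v j < v k} = insert (k+2) {j : ℤ | (k < j ∧ j ≠ k+2) ∧ v j < c} := by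
      ext j
      simp only [Set.mem_setOf_eq, Set.mem_insert_iff, hv0]
      constructor
      · rintro ⟨h1, h2⟩
        by_cases hj : j = k+2
        · exact Or.inl hj
        · exact Or.inr ⟨⟨h1, hj⟩, h2⟩
      · rintro (rfl | ⟨⟨h1, h2⟩, h3⟩)
        · exact ⟨by omega, by rw [hv2]; omega⟩
        · exact ⟨h1, h3⟩
    calc Nat.card {j : ℤ // k < j ∧ v j < v k}
        = ({j : ℤ | k < j ∧ v j < v k}).ncard := rfl
      _ = (insert (k+2) {j : ℤ | (k < j ∧ j ≠ k+2) ∧ v j < c}).ncard := by rw [hset]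
      _ = ({j : ℤ | (k < j ∧ j ≠ k+2) ∧ v j < c}).ncard + 1 :=
          Set.ncard_insert_of_notMem (by simp) finC
      _ = Nat.card {j : ℤ // (k < j ∧ j ≠ k+2) ∧ v j < c} + 1 := rfl
  have Ewk' : codeEntry w k = codeEntry v (k+2) + 1 := by
    rw [Ewk, codeEntry_def]
    have hset : {j : ℤ | ((k + 2 < j) ∨ j = k + 1) ∧ v j < b}
        = insert (k+1) {j : ℤ | k + 2 < j ∧ v j < v (k+2)} := by
      ext j
      simp only [Set.mem_setOf_eq, Set.mem_insert_iff, hv2]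
      constructor
      · rintro ⟨h1 | rfl, h2⟩
        · exact Or.inr ⟨h1, h2⟩
        · exact Or.inl rfl
      · rintro (rfl | ⟨h1, h2⟩)
        · exact ⟨Or.inr rfl, by rw [hv1]; omega⟩
        · exact ⟨Or.inl h1, h2⟩
    calc Nat.card {j : ℤ // ((k + 2 < j) ∨ j = k + 1) ∧ v j < b}
        = ({j : ℤ | ((k + 2 < j) ∨ j = k + 1) ∧ v j < b}).ncard := rfl
      _ = (insert (k+1) {j : ℤ | k + 2 < j ∧ v j < v (k+2)}).ncard := by rw [hset]
      _ = ({j : ℤ | k + 2 < j ∧ v j < v (k+2)}).ncard + 1 := by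
          refine Set.ncard_insert_of_notMem (by rintro ⟨h1, -⟩; omega) ?_
          have : {j : ℤ | k + 2 < j ∧ v j < v (k+2)} = {j : ℤ | k + 2 < j ∧ v j < b} := by
            simp only [hv2]
          rw [this]; exact finB
      _ = Nat.card {j : ℤ // k + 2 < j ∧ v j < v (k+2)} + 1 := rfl
  have Fact4 : codeEntry w k ≤ codeEntry w (k+1) := by
    rw [Ewk, Ew1]
    have hsub : {j : ℤ | ((k + 2 < j) ∨ j = k + 1) ∧ v j < b}
        ⊆ {j : ℤ | (k < j ∧ j ≠ k+2) ∧ v j < c} := by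
      rintro j ⟨h1 | rfl, h2⟩
      · exact ⟨⟨by omega, by omega⟩, by omega⟩
      · exact ⟨⟨by omega, by omega⟩, by omega⟩
    exact Set.ncard_le_ncard hsub finC
  have Fact1 : codeEntry v k = codeEntry w (k+1) + 1 := by rw [Ew1, Evk]
  -- window representatives
  obtain ⟨r0, q0, hr01, hr0n, hk0⟩ := exists_rep n hn k
  obtain ⟨r1, q1, hr11, hr1n, hk1⟩ := exists_rep n hn (k+1)
  obtain ⟨r2, q2, hr21, hr2n, hk2⟩ := exists_rep n hn (k+2)
  have pv0 : codeEntry v k = codeEntry v r0 := by rw [hk0]; exact codeEntry_period hv r0 q0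
  have pv1 : codeEntry v (k+1) = codeEntry v r1 := by rw [hk1]; exact codeEntry_period hv r1 q1
  have pv2 : codeEntry v (k+2) = codeEntry v r2 := by rw [hk2]; exact codeEntry_period hv r2 q2
  have pw0 : codeEntry w k = codeEntry w r0 := by rw [hk0]; exact codeEntry_period hw r0 q0
  have pw1 : codeEntry w (k+1) = codeEntry w r1 := by rw [hk1]; exact codeEntry_period hw r1 q1
  have pw2 : codeEntry w (k+2) = codeEntry w r2 := by rw [hk2]; exact codeEntry_period hw r2 q2
  have hd01 : r0 ≠ r1 := by
    intro he
    subst he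
    have e : (n:ℤ)*(q1 - q0) = 1 := by linear_combination hk0 - hk1
    rcases htri (q1 - q0) with h | h | h <;> omega
  have hd02 : r0 ≠ r2 := by
    intro he
    subst he
    have e : (n:ℤ)*(q2 - q0) = 2 := by linear_combination hk0 - hk2
    rcases htri (q2 - q0) with h | h | h <;> omega
  have hd12 : r1 ≠ r2 := by
    intro he
    subst he
    have e : (n:ℤ)*(q2 - q1) = 1 := by linear_combination hk1 - hk2
    rcases htri (q2 - q1) with h | h | h <;> omega
  have hr0mem : r0 ∈ (Finset.Icc (1:ℤ) (n:ℤ)).val :=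
    Finset.mem_val.mpr (Finset.mem_Icc.mpr ⟨hr01, hr0n⟩)
  have hr1mem : r1 ∈ (Finset.Icc (1:ℤ) (n:ℤ)).val :=
    Finset.mem_val.mpr (Finset.mem_Icc.mpr ⟨hr11, hr1n⟩)
  have hr2mem : r2 ∈ (Finset.Icc (1:ℤ) (n:ℤ)).val :=
    Finset.mem_val.mpr (Finset.mem_Icc.mpr ⟨hr21, hr2n⟩)
  have hnd : ((Finset.Icc (1:ℤ) (n:ℤ)).val).Nodup := (Finset.Icc _ _).nodup
  have hm1 : r1 ∈ (Finset.Icc (1:ℤ) (n:ℤ)).val.erase r0 :=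
    (Multiset.mem_erase_of_ne hd01.symm).mpr hr1mem
  have hm2 : r2 ∈ ((Finset.Icc (1:ℤ) (n:ℤ)).val.erase r0).erase r1 :=
    (Multiset.mem_erase_of_ne hd12.symm).mpr ((Multiset.mem_erase_of_ne hd02.symm).mpr hr2mem)
  set R : Multiset ℤ := (((Finset.Icc (1:ℤ) (n:ℤ)).val.erase r0).erase r1).erase r2 with hRdef
  have hsplit : (Finset.Icc (1:ℤ) (n:ℤ)).val = r0 ::ₘ r1 ::ₘ r2 ::ₘ R := by
    rw [hRdef, Multiset.cons_erase hm2, Multiset.cons_erase hm1, Multiset.cons_erase hr0mem]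
  -- uniqueness of residues inside the window
  have uniq : ∀ i r : ℤ, 1 ≤ i → i ≤ (n:ℤ) → 1 ≤ r → r ≤ (n:ℤ) →
      ∀ t : ℤ, i = r + (n:ℤ)*t → i = r := fun i r h1 h2 h3 h4 t ht =>
    winuniq hn' h1 h2 h3 h4 ht
  have hRres : ∀ i ∈ R, (i - k) % (n:ℤ) ≠ 0 ∧ (i - (k+1)) % (n:ℤ) ≠ 0 ∧
      (i - (k+2)) % (n:ℤ) ≠ 0 := by
    intro i hi
    have d1 : ((Finset.Icc (1:ℤ) (n:ℤ)).val.erase r0).Nodup := Multiset.Nodup.erase r0 hnd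
    have d2 : (((Finset.Icc (1:ℤ) (n:ℤ)).val.erase r0).erase r1).Nodup :=
      Multiset.Nodup.erase r1 d1
    rw [hRdef] at hi
    obtain ⟨hne2, hi2⟩ := (Multiset.Nodup.mem_erase_iff d2).mp hi
    obtain ⟨hne1, hi1⟩ := (Multiset.Nodup.mem_erase_iff d1).mp hi2
    obtain ⟨hne0, hi0⟩ := (Multiset.Nodup.mem_erase_iff hnd).mp hi1
    obtain ⟨hib1, hibn⟩ := Finset.mem_Icc.mp (Finset.mem_val.mp hi0)
    refine ⟨?_, ?_, ?_⟩
    · intro h0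
      obtain ⟨t, ht⟩ := Int.dvd_iff_emod_eq_zero.mpr h0
      have : i = r0 + (n:ℤ)*(q0 + t) := by
        have : i = k + (n:ℤ)*t := by omega
        rw [this, hk0]; ring
      exact hne0 (uniq i r0 hib1 hibn hr01 hr0n (q0 + t) this)
    · intro h1
      obtain ⟨t, ht⟩ := Int.dvd_iff_emod_eq_zero.mpr h1
      have : i = r1 + (n:ℤ)*(q1 + t) := by
        have : i = (k+1) + (n:ℤ)*t := by omega
        rw [this, hk1]; ring
      exact hne1 (uniq i r1 hib1 hibn hr11 hr1n (q1 + t) this)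
    · intro h2
      obtain ⟨t, ht⟩ := Int.dvd_iff_emod_eq_zero.mpr h2
      have : i = r2 + (n:ℤ)*(q2 + t) := by
        have : i = (k+2) + (n:ℤ)*t := by omega
        rw [this, hk2]; ring
      exact hne2 (uniq i r2 hib1 hibn hr21 hr2n (q2 + t) this)
  have hRmap : Multiset.map (codeEntry w) R = Multiset.map (codeEntry v) R :=
    Multiset.map_congr rfl (fun i hi => FD i (hRres i hi).1 (hRres i hi).2.1 (hRres i hi).2.2)
  -- name the six entries
  constructor
  · -- the shapes differ
    intro heq
    have h := congrFun heq (codeEntry w (k+1))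
    simp only [affShape, inv_inv] at h
    rw [hsplit] at h
    simp only [Multiset.map_cons, Multiset.countP_cons] at h
    rw [← pv0, ← pv1, ← pv2, ← pw0, ← pw1, ← pw2, hRmap, Ew2] at h
    have heta : (fun x => codeEntry v x) = codeEntry v := rfl
    rw [heta] at h
    split_ifs at h <;> omega
  · -- dominance of partial sums
    intro K
    simp only [affShape, inv_inv]
    rw [sum_countP, sum_countP, hsplit]
    simp only [Multiset.map_cons, Multiset.sum_cons]
    rw [← pv0, ← pv1, ← pv2, ← pw0, ← pw1, ← pw2, hRmap, Ew2]
    have heta : (fun x => codeEntry v x) = codeEntry v := rfl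
    rw [heta]
    have F1 := Fact1
    have F2 := Ewk'
    have F4 := Fact4
    omega

private lemma domLT_trans {p q r : ℕ → ℕ} (h1 : DomLT p q) (h2 : DomLT q r) : DomLT p r := by
  obtain ⟨hne1, hle1⟩ := h1
  obtain ⟨hne2, hle2⟩ := h2
  refine ⟨?_, fun k => le_trans (hle1 k) (hle2 k)⟩
  intro hpr
  apply hne1
  funext k
  have hs : ∀ K, (∑ i ∈ Finset.range K, p i) = ∑ i ∈ Finset.range K, q i := by
    intro K
    have ha := hle1 K
    have hb := hle2 K
    rw [← hpr] at hb
    omega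
  have e1 := hs k
  have e2 := hs (k+1)
  rw [Finset.sum_range_succ, Finset.sum_range_succ] at e2
  omega

/-- if `π ≺_A σ` then `λ(π) < λ(σ)` in dominance order. -/
theorem shape_lt_of_atom_order (n : ℕ) (hn : 0 < n)
    (π σ : Equiv.Perm ℤ) (hπ : IsAffine n π) (hσ : IsAffine n σ)
    (h : Relation.TransGen
      (fun x y : Equiv.Perm ℤ =>
        ∃ v w : Equiv.Perm ℤ, IsAffine n v ∧ IsAffine n w ∧ x = v⁻¹ ∧ y = w⁻¹ ∧
          ∃ k a b c : ℤ, a < b ∧ b < c ∧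
            v k = c ∧ v (k + 1) = a ∧ v (k + 2) = b ∧
            w k = b ∧ w (k + 1) = c ∧ w (k + 2) = a ∧
            (∀ m : ℤ, (m - k) % (n : ℤ) ≠ 0 → (m - (k + 1)) % (n : ℤ) ≠ 0 →
              (m - (k + 2)) % (n : ℤ) ≠ 0 → v m = w m))
      π σ) :
    DomLT (affShape n π) (affShape n σ) := by
  clear hπ hσ
  have step : ∀ x y : Equiv.Perm ℤ,
      (∃ v w : Equiv.Perm ℤ, IsAffine n v ∧ IsAffine n w ∧ x = v⁻¹ ∧ y = w⁻¹ ∧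
        ∃ k a b c : ℤ, a < b ∧ b < c ∧
          v k = c ∧ v (k + 1) = a ∧ v (k + 2) = b ∧
          w k = b ∧ w (k + 1) = c ∧ w (k + 2) = a ∧
          (∀ m : ℤ, (m - k) % (n : ℤ) ≠ 0 → (m - (k + 1)) % (n : ℤ) ≠ 0 →
            (m - (k + 2)) % (n : ℤ) ≠ 0 → v m = w m)) →
      DomLT (affShape n x) (affShape n y) := by
    rintro x y ⟨v, w, hva, hwa, rfl, rfl, k, a, b, c, hab, hbc,
      hv0, hv1, hv2, hw0, hw1, hw2, hoth⟩
    exact step_domlt n hn v w hva.1 hwa.1 k a b c hab hbc hv0 hv1 hv2 hw0 hw1 hw2 hoth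
  induction h with
  | single hr => exact step _ _ hr
  | tail _ hr ih => exact domLT_trans ih (step _ _ hr)
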